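/- Define I(ρ) = ∫_ℝ |erf(χ) - erf(ρχ)| dχ for ρ > 0. Then I(ρ) = (2/√π)|1 - 1/ρ|, and in particular for any ρ_1, ρ_2 > 1 the ratio I(ρ_1)/I(ρ_2) = (1 - 1/ρ_1)/(1 - 1/ρ_2). -/

import Mathlib

open MeasureTheory Real

open MeasureTheory Real

noncomputable def erf (ζ : ℝ) : ℝ := (2 / Real.sqrt Real.pi) * ∫ χ in (0:ℝ)..ζ, Real.exp (-χ^2)

namespace Stmt14Aux

lemma cont_g : Continuous fun s : ℝ => Real.exp (-s^2) := by continuity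

lemma g_intble (a b : ℝ) : IntervalIntegrable (fun s : ℝ => Real.exp (-s^2)) volume a b :=
  cont_g.intervalIntegrable a b

lemma continuous_erf : Continuous erf :=
  continuous_const.mul (intervalIntegral.continuous_primitive (fun a b => g_intble a b) 0)

lemma erf_sub (a b : ℝ) :
    erf a - erf b = (2 / Real.sqrt Real.pi) * ∫ s in b..a, Real.exp (-s^2) := by
  unfold erf
  rw [← mul_sub, intervalIntegral.integral_interval_sub_left (g_intble 0 a) (g_intble 0 b)]

lemma abs_erf_sub (a b : ℝ) :
    |erf a - erf b| = (2 / Real.sqrt Real.pi) * ∫ s in Set.uIoc b a, Real.exp (-s^2) := by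
  rw [erf_sub, abs_mul, abs_of_nonneg (by positivity : (0:ℝ) ≤ 2 / Real.sqrt Real.pi)]
  congr 1
  rcases le_total b a with h | h
  · rw [intervalIntegral.integral_of_le h, Set.uIoc_of_le h,
      abs_of_nonneg (setIntegral_nonneg measurableSet_Ioc fun x _ => (Real.exp_pos _).le)]
  · rw [intervalIntegral.integral_symm, intervalIntegral.integral_of_le h, Set.uIoc_comm,
      Set.uIoc_of_le h, abs_neg,
      abs_of_nonneg (setIntegral_nonneg measurableSet_Ioc fun x _ => (Real.exp_pos _).le)]

lemma set_eq (ρ : ℝ) (hρ : 0 < ρ) (s : ℝ) :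
    {χ : ℝ | s ∈ Set.uIoc (ρ * χ) χ} = Set.Ico (min s (s / ρ)) (max s (s / ρ)) := by
  ext χ
  simp only [Set.mem_setOf_eq, Set.mem_uIoc, Set.mem_Ico, min_le_iff, lt_max_iff,
    div_le_iff₀ hρ, lt_div_iff₀ hρ, mul_comm χ ρ]
  constructor
  · rintro (⟨h1, h2⟩ | ⟨h1, h2⟩) <;> constructor <;> tauto
  · rintro ⟨h1 | h1, h2 | h2⟩
    · exact absurd h1 (not_le.mpr h2)
    · exact Or.inl ⟨h2, h1⟩
    · exact Or.inr ⟨h2, h1⟩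
    · exact absurd h1 (not_le.mpr h2)

lemma vol_eq (ρ : ℝ) (hρ : 0 < ρ) (s : ℝ) :
    volume {χ : ℝ | s ∈ Set.uIoc (ρ * χ) χ} = ENNReal.ofReal (|s| * |1 - 1/ρ|) := by
  rw [set_eq ρ hρ s, Real.volume_Ico, max_sub_min_eq_abs]
  rw [abs_sub_comm, show s - s/ρ = s * (1 - 1/ρ) by ring, abs_mul]

lemma ioi_integral : ∫ x in Set.Ioi (0:ℝ), x * Real.exp (-x^2) = 1/2 := by
  have hd : ∀ x ∈ Set.Ici (0:ℝ),
      HasDerivAt (fun y : ℝ => -(1/2) * Real.exp (-y^2)) (x * Real.exp (-x^2)) x := by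
    intro x _
    have h1 : HasDerivAt (fun y : ℝ => -y^2) (-(2*x)) x := by
      simpa [Pi.neg_def] using (hasDerivAt_pow 2 x).neg
    have := (h1.exp).const_mul (-(1/2 : ℝ))
    exact this.congr_deriv (by ring)
  have hi : IntegrableOn (fun x : ℝ => x * Real.exp (-x^2)) (Set.Ioi 0) := by
    have := integrable_mul_exp_neg_mul_sq (one_pos (α := ℝ))
    simpa using this.integrableOn
  have ht : Filter.Tendsto (fun y : ℝ => -(1/2) * Real.exp (-y^2)) Filter.atTop (nhds 0) := by
    have h1 : Filter.Tendsto (fun y : ℝ => -y^2) Filter.atTop Filter.atBot := by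
      simpa using Filter.tendsto_neg_atTop_atBot.comp (tendsto_pow_atTop (two_ne_zero))
    have h2 := Real.tendsto_exp_atBot.comp h1
    have := h2.const_mul (-(1/2 : ℝ))
    simpa using this
  have := integral_Ioi_of_hasDerivAt_of_tendsto' hd hi ht
  rw [this]
  norm_num

lemma abs_integrable : Integrable (fun s : ℝ => |s| * Real.exp (-s^2)) := by
  have := (integrable_mul_exp_neg_mul_sq (one_pos (α := ℝ))).abs
  refine this.congr ?_
  filter_upwards with x
  rw [abs_mul, abs_of_pos (Real.exp_pos _), neg_one_mul]

lemma abs_integral : ∫ s : ℝ, |s| * Real.exp (-s^2) = 1 := by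
  have h : ∀ s : ℝ, |s| * Real.exp (-s^2) = (fun t : ℝ => t * Real.exp (-t^2)) |s| := by
    intro s; simp [sq_abs]
  rw [show (fun s : ℝ => |s| * Real.exp (-s^2)) = fun s : ℝ => (fun t : ℝ => t * Real.exp (-t^2)) |s| from funext h]
  rw [integral_comp_abs (f := fun t : ℝ => t * Real.exp (-t^2)), ioi_integral]
  norm_num

end Stmt14Aux

namespace Stmt14Aux

lemma main (ρ : ℝ) (hρ : 0 < ρ) :
    ∫ χ : ℝ, |erf χ - erf (ρ * χ)| = (2 / Real.sqrt Real.pi) * |1 - 1/ρ| := by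
  have hc0 : (0:ℝ) ≤ 2 / Real.sqrt Real.pi := by positivity
  have hmeas : AEStronglyMeasurable (fun χ : ℝ => |erf χ - erf (ρ * χ)|) volume :=
    ((continuous_erf.sub (continuous_erf.comp (continuous_const.mul continuous_id))).abs).aestronglyMeasurable
  rw [integral_eq_lintegral_of_nonneg_ae (Filter.Eventually.of_forall fun χ => abs_nonneg _) hmeas]
  have key : ∀ χ : ℝ, ENNReal.ofReal |erf χ - erf (ρ * χ)|
      = ENNReal.ofReal (2 / Real.sqrt Real.pi) *
        ∫⁻ s, Set.indicator (Set.uIoc (ρ*χ) χ) (fun s => ENNReal.ofReal (Real.exp (-s^2))) s := by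
    intro χ
    rw [abs_erf_sub, ENNReal.ofReal_mul hc0]
    congr 1
    rw [ofReal_integral_eq_lintegral_ofReal
      (intervalIntegrable_iff.mp (g_intble (ρ*χ) χ))
      (Filter.Eventually.of_forall fun s => (Real.exp_pos _).le),
      ← lintegral_indicator measurableSet_uIoc]
  simp_rw [key]
  rw [lintegral_const_mul' _ _ ENNReal.ofReal_ne_top]
  have hswap : ∫⁻ χ : ℝ, ∫⁻ s : ℝ,
        Set.indicator (Set.uIoc (ρ*χ) χ) (fun s => ENNReal.ofReal (Real.exp (-s^2))) s
      = ∫⁻ s : ℝ, ∫⁻ χ : ℝ,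
        Set.indicator (Set.uIoc (ρ*χ) χ) (fun s => ENNReal.ofReal (Real.exp (-s^2))) s := by
    apply lintegral_lintegral_swap
    have huncurry : (Function.uncurry fun χ s =>
        Set.indicator (Set.uIoc (ρ*χ) χ) (fun s => ENNReal.ofReal (Real.exp (-s^2))) s)
        = Set.indicator {p : ℝ × ℝ | p.2 ∈ Set.uIoc (ρ*p.1) p.1}
            (fun p => ENNReal.ofReal (Real.exp (-p.2^2))) := by
      funext p
      by_cases h : p.2 ∈ Set.uIoc (ρ*p.1) p.1 <;>
        simp [Function.uncurry, Set.indicator_apply, h]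
    rw [huncurry]
    apply Measurable.aemeasurable
    apply Measurable.indicator
    · exact (Real.measurable_exp.comp ((measurable_snd.pow_const 2).neg)).ennreal_ofReal
    · have hset : {p : ℝ × ℝ | p.2 ∈ Set.uIoc (ρ*p.1) p.1}
          = {p : ℝ × ℝ | min (ρ*p.1) p.1 < p.2} ∩ {p : ℝ × ℝ | p.2 ≤ max (ρ*p.1) p.1} := by
        ext p
        simp [Set.uIoc, Set.mem_Ioc, Set.mem_setOf_eq]
      rw [hset]
      exact (measurableSet_lt ((measurable_fst.const_mul ρ).min measurable_fst) measurable_snd).inter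
        (measurableSet_le measurable_snd ((measurable_fst.const_mul ρ).max measurable_fst))
  rw [hswap]
  have inner : ∀ s : ℝ, (∫⁻ χ : ℝ,
        Set.indicator (Set.uIoc (ρ*χ) χ) (fun s => ENNReal.ofReal (Real.exp (-s^2))) s)
      = ENNReal.ofReal (Real.exp (-s^2)) * ENNReal.ofReal (|s| * |1 - 1/ρ|) := by
    intro s
    have hpt : ∀ χ : ℝ, Set.indicator (Set.uIoc (ρ*χ) χ) (fun s => ENNReal.ofReal (Real.exp (-s^2))) s
        = Set.indicator {χ : ℝ | s ∈ Set.uIoc (ρ*χ) χ}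
            (fun _ => ENNReal.ofReal (Real.exp (-s^2))) χ := by
      intro χ
      by_cases h : s ∈ Set.uIoc (ρ*χ) χ <;> simp [Set.indicator_apply, h]
    simp_rw [hpt, set_eq ρ hρ s]
    rw [lintegral_indicator measurableSet_Ico, setLIntegral_const,
      ← set_eq ρ hρ s, vol_eq ρ hρ s]
  simp_rw [inner]
  have hcomb : ∀ s : ℝ, ENNReal.ofReal (Real.exp (-s^2)) * ENNReal.ofReal (|s| * |1 - 1/ρ|)
      = ENNReal.ofReal (|s| * Real.exp (-s^2)) * ENNReal.ofReal |1 - 1/ρ| := by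
    intro s
    rw [← ENNReal.ofReal_mul (Real.exp_pos _).le,
      ← ENNReal.ofReal_mul (by positivity : (0:ℝ) ≤ |s| * Real.exp (-s^2))]
    congr 1
    ring
  simp_rw [hcomb]
  rw [lintegral_mul_const' _ _ ENNReal.ofReal_ne_top,
    ← ofReal_integral_eq_lintegral_ofReal abs_integrable
      (Filter.Eventually.of_forall fun s => by positivity),
    abs_integral, ENNReal.ofReal_one, one_mul, ← ENNReal.ofReal_mul hc0,
    ENNReal.toReal_ofReal (by positivity)]

end Stmt14Aux

theorem stmt14 (I : ℝ → ℝ) (hI : ∀ ρ : ℝ, I ρ = ∫ χ : ℝ, |erf χ - erf (ρ * χ)|) :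
    (∀ ρ : ℝ, 0 < ρ → I ρ = (2 / Real.sqrt Real.pi) * |1 - 1/ρ|) ∧
    (∀ ρ1 ρ2 : ℝ, 1 < ρ1 → 1 < ρ2 → I ρ1 / I ρ2 = (1 - 1/ρ1) / (1 - 1/ρ2)) := by
  have part1 : ∀ ρ : ℝ, 0 < ρ → I ρ = (2 / Real.sqrt Real.pi) * |1 - 1/ρ| := by
    intro ρ hρ
    rw [hI ρ, Stmt14Aux.main ρ hρ]
  refine ⟨part1, fun ρ1 ρ2 h1 h2 => ?_⟩
  have e1 := part1 ρ1 (by linarith)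
  have e2 := part1 ρ2 (by linarith)
  have ha1 : |1 - 1/ρ1| = 1 - 1/ρ1 := abs_of_nonneg (by
    have : 1/ρ1 < 1 := (div_lt_one (by linarith)).mpr h1
    linarith)
  have ha2 : |1 - 1/ρ2| = 1 - 1/ρ2 := abs_of_nonneg (by
    have : 1/ρ2 < 1 := (div_lt_one (by linarith)).mpr h2
    linarith)
  rw [e1, e2, ha1, ha2]
  exact mul_div_mul_left _ _ (by positivity)
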